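/- Let w be a word of length n and 𝒫 a Parikh vector of norm p = |𝒫|. Suppose (b,h,t,e) is an occurrence with abelian period 𝒫 in w and e + 1 ≤ n − 1. If 𝒫_{w[e−t+1..e+1]} ⊆ 𝒫, then (b, h, (t+1) mod p, e+1) is an occurrence with abelian period 𝒫 in w (the occurrence extends one position to the right, the tail growing by one letter, or rolling over into a new full block when t + 1 = p). -/

import Mathlib

/-- The Parikh vector of a word `v`: the number of occurrences of each letter. -/
def parikh {α : Type*} [DecidableEq α] (v : List α) : α → ℕ := fun a => v.count a

/-- The norm of a Parikh vector: the sum of its components. -/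
def pnorm {α : Type*} [Fintype α] (P : α → ℕ) : ℕ := ∑ a, P a

/-- Non-strict containment of Parikh vectors: `P ⊆ Q`. -/
def PLe {α : Type*} (P Q : α → ℕ) : Prop := ∀ a, P a ≤ Q a

/-- Strict containment of Parikh vectors: `P ⊂ Q`, i.e. componentwise `≤` and smaller norm. -/
def PLt {α : Type*} [Fintype α] (P Q : α → ℕ) : Prop :=
  (∀ a, P a ≤ Q a) ∧ pnorm P < pnorm Q

/-- The substring `w[i..j]` of `w`, from position `i` to position `j`, both included. -/
def substr {α : Type*} (w : List α) (i j : ℕ) : List α := (w.drop i).take (j + 1 - i)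

/-- `(b,h,t,e)` is an occurrence of a substring of `w` with abelian period `P`:
`w[b..e] = u₀u₁⋯u_{k-1}u_k` for some `k ≥ 2`, with `|u₀| = h`, `|u_k| = t`,
`𝒫_{u_1} = ⋯ = 𝒫_{u_{k-1}} = P`, `𝒫_{u₀} ⊂ P` and `𝒫_{u_k} ⊂ P`. -/
def IsOcc {α : Type*} [Fintype α] [DecidableEq α]
    (w : List α) (P : α → ℕ) (b h t e : ℕ) : Prop :=
  b ≤ e ∧ e < w.length ∧
  ∃ (u0 uk : List α) (us : List (List α)),
    substr w b e = u0 ++ us.flatten ++ uk ∧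
    u0.length = h ∧ uk.length = t ∧
    1 ≤ us.length ∧
    (∀ u ∈ us, parikh u = P) ∧
    PLt (parikh u0) P ∧ PLt (parikh uk) P

/-- An occurrence `(b,h,t,e)` with abelian period `P` is left-maximal if there is no
occurrence `(b-1,h',t',e)` with the same abelian period `P`. -/
def LeftMaximal {α : Type*} [Fintype α] [DecidableEq α]
    (w : List α) (P : α → ℕ) (b h t e : ℕ) : Prop :=
  IsOcc w P b h t e ∧ ∀ b' h' t', b' + 1 = b → ¬ IsOcc w P b' h' t' e

/-- An occurrence `(b,h,t,e)` with abelian period `P` is right-maximal if there is no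
occurrence `(b,h',t',e+1)` with the same abelian period `P`. -/
def RightMaximal {α : Type*} [Fintype α] [DecidableEq α]
    (w : List α) (P : α → ℕ) (b h t e : ℕ) : Prop :=
  IsOcc w P b h t e ∧ ∀ h' t', ¬ IsOcc w P b h' t' (e + 1)

/-- An abelian run of period `P` is a maximal occurrence `(b,h,t,e)` with abelian period `P`
such that `e - b - h - t + 1 ≥ 2|P|`. -/
def IsAbelianRun {α : Type*} [Fintype α] [DecidableEq α]
    (w : List α) (P : α → ℕ) (b h t e : ℕ) : Prop :=
  LeftMaximal w P b h t e ∧ RightMaximal w P b h t e ∧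
  b + h + t + 2 * pnorm P ≤ e + 1


lemma pnorm_parikh {α : Type*} [Fintype α] [DecidableEq α] (v : List α) :
    pnorm (parikh v) = v.length := by
  induction v with
  | nil => simp [pnorm, parikh]
  | cons x l ih =>
    simp only [pnorm, parikh, List.count_cons, List.length_cons] at *
    rw [Finset.sum_add_distrib, ih]
    simp

/-- An occurrence with abelian period `P` extends one position to the right whenever the
Parikh vector of the extended tail is contained in `P`. -/
theorem occ_extend_right {α : Type*} [Fintype α] [DecidableEq α]
    (w : List α) (P : α → ℕ) (b h t e : ℕ)
    (hocc : IsOcc w P b h t e)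
    (he : e + 1 ≤ w.length - 1)
    (hext : PLe (parikh (substr w (e + 1 - t) (e + 1))) P) :
    IsOcc w P b h ((t + 1) % pnorm P) (e + 1) := by
  obtain ⟨hbe, helen, u0, uk, us, hdecomp, hh, ht, hus1, husP, hu0, huk⟩ := hocc
  have hlen : e + 1 < w.length := by omega
  have hget : w[e+1]? = some (w[e+1]'hlen) := List.getElem?_eq_getElem hlen
  -- length of the window
  have hw'len : (substr w b e).length = e + 1 - b := by
    simp [substr]; omega
  have hlens : h + us.flatten.length + t = e + 1 - b := by
    have := congrArg List.length hdecomp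
    rw [hw'len] at this
    simp only [List.length_append, hh, ht] at this
    omega
  have htle : t ≤ e + 1 - b := by omega
  -- uk is the last t letters
  have huk_eq : uk = List.take t (List.drop (e + 1 - t) w) := by
    have h1 : List.drop (u0 ++ us.flatten).length ((u0 ++ us.flatten) ++ uk) = uk :=
      List.drop_left
    have h2 : substr w b e = (u0 ++ us.flatten) ++ uk := by
      rw [hdecomp, List.append_assoc]
    rw [← h2] at h1
    have h3 : (u0 ++ us.flatten).length = e + 1 - b - t := by
      simp only [List.length_append, hh]; omega
    rw [h3] at h1
    rw [← h1, substr, List.drop_take, List.drop_drop]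
    have e1 : e + 1 - b - (e + 1 - b - t) = t := by omega
    have e2 : b + (e + 1 - b - t) = e + 1 - t := by omega
    rw [e1, e2]
  have hc : w[e+1]'hlen = w[e+1]'hlen := rfl
  set c := w[e+1]'hlen with hcdef
  -- the extended tail
  have hext_eq : substr w (e + 1 - t) (e + 1) = uk ++ [c] := by
    have h1 : e + 1 + 1 - (e + 1 - t) = t + 1 := by omega
    rw [substr, h1, List.take_succ, ← huk_eq]
    congr 1
    rw [List.getElem?_drop]
    have : e + 1 - t + t = e + 1 := by omega
    rw [this, hget]
    rfl
  -- the extended window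
  have hwin : substr w b (e + 1) = substr w b e ++ [c] := by
    have h1 : e + 1 + 1 - b = (e + 1 - b) + 1 := by omega
    rw [substr, h1, List.take_succ, substr]
    congr 1
    rw [List.getElem?_drop]
    have : b + (e + 1 - b) = e + 1 := by omega
    rw [this, hget]
    rfl
  have hple : PLe (parikh (uk ++ [c])) P := by rwa [← hext_eq]
  have hpnorm : pnorm (parikh (uk ++ [c])) = t + 1 := by
    rw [pnorm_parikh]; simp [ht]
  have hp : t < pnorm P := by
    have := huk.2
    rwa [pnorm_parikh, ht] at this
  by_cases hcase : t + 1 < pnorm P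
  · -- tail grows by one letter
    rw [Nat.mod_eq_of_lt hcase]
    refine ⟨by omega, hlen, u0, uk ++ [c], us, ?_, hh, by simp [ht], hus1, husP, hu0,
      hple, by omega⟩
    rw [hwin, hdecomp]
    simp
  · -- roll over into a new full block
    have heq : t + 1 = pnorm P := by omega
    have hmod : (t + 1) % pnorm P = 0 := by rw [heq]; exact Nat.mod_self _
    rw [hmod]
    have hvP : parikh (uk ++ [c]) = P := by
      funext a
      have hsum : ∑ a, parikh (uk ++ [c]) a = ∑ a, P a := by
        have : pnorm (parikh (uk ++ [c])) = pnorm P := by rw [hpnorm, heq]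
        simpa [pnorm] using this
      exact (Finset.sum_eq_sum_iff_of_le (fun i _ => hple i)).mp hsum a (Finset.mem_univ a)
    refine ⟨by omega, hlen, u0, [], us ++ [uk ++ [c]], ?_, hh, rfl, by simp, ?_, hu0, ?_⟩
    · rw [hwin, hdecomp]; simp
    · intro u hu
      rcases List.mem_append.mp hu with h | h
      · exact husP u h
      · simp at h; rw [h, hvP]
    · refine ⟨fun a => by simp [parikh], ?_⟩
      rw [pnorm_parikh]
      simp
      omega
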